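/- arXiv:2303.07218 — 2 statements merged into one kernel-verified Lean document; each statement's English description precedes it below -/
import Mathlib

section
/- Let T' be a unimodular triangulation of a lattice polytope P' ⊂ ℝ^N and T'' a unimodular triangulation of a lattice polytope P'' ⊂ ℝ^M, and suppose there exists an injective ℤ-affine map ψ : ℝ^N → ℝ^M (an affine map sending ℤ^N into ℤ^M) which maps every simplex of T' affine-isomorphically onto some simplex of T''. Then the ℂ-algebra homomorphism ψ* on polynomial rings defined on generators by ψ*(x_{p''}) = x_{ψ^{-1}(p'')} if p'' lies in the image of ψ and ψ*(x_{p''}) = 0 otherwise satisfies ψ*(I'') ⊆ I' and ψ*(J'') ⊆ J', and hence induces a graded ℂ-algebra homomorphism ψ* : A*(T'') → A*(T'). -/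
open scoped BigOperators Pointwise
open MvPolynomial

noncomputable section

namespace EhrhartChow

/-- A point of `ℝ^N` with integer coordinates. -/
def IsLatticePoint {N : ℕ} (x : Fin N → ℝ) : Prop := ∀ i, ∃ z : ℤ, x i = (z : ℝ)

/-- A lattice polytope: the convex hull of finitely many lattice points. -/
def IsLatticePolytope {N : ℕ} (P : Set (Fin N → ℝ)) : Prop :=
  ∃ S : Finset (Fin N → ℝ), (∀ p ∈ S, IsLatticePoint p) ∧
    P = convexHull ℝ (S : Set (Fin N → ℝ))

/-- Dimension of a subset of `ℝ^N`. -/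
def setDim {N : ℕ} (s : Set (Fin N → ℝ)) : ℕ := Module.finrank ℝ ↥(vectorSpan ℝ s)

/-- The lattice points belonging to a set `P`. -/
def latticePoints {N : ℕ} (P : Set (Fin N → ℝ)) : Set (Fin N → ℝ) :=
  {x | x ∈ P ∧ IsLatticePoint x}

/-- A triangulation of a polytope `P ⊆ ℝ^N`, encoded by the vertex sets of its simplices. -/
structure Triangulation (N : ℕ) (P : Set (Fin N → ℝ)) where
  faces : Set (Finset (Fin N → ℝ))
  lattice_vertices : ∀ V ∈ faces, ∀ p ∈ V, IsLatticePoint p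
  indep : ∀ V ∈ faces, AffineIndependent ℝ (fun x : (V : Set (Fin N → ℝ)) => (x.1 : Fin N → ℝ))
  union_eq : (⋃ V ∈ faces, convexHull ℝ (V : Set (Fin N → ℝ))) = P
  down_closed : ∀ V ∈ faces, ∀ W : Finset (Fin N → ℝ), W ⊆ V → W ∈ faces
  inter_face : ∀ V ∈ faces, ∀ W ∈ faces,
    convexHull ℝ (V : Set (Fin N → ℝ)) ∩ convexHull ℝ (W : Set (Fin N → ℝ)) =
      convexHull ℝ ((V : Set (Fin N → ℝ)) ∩ (W : Set (Fin N → ℝ)))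

namespace Triangulation

variable {N : ℕ} {P : Set (Fin N → ℝ)}

/-- Unimodularity: the vertex set of every simplex can be completed to an affine
basis of `ℤ^N`. -/
def IsUnimodular (T : Triangulation N P) : Prop :=
  ∀ V ∈ T.faces, ∃ b : Fin (N + 1) → (Fin N → ℝ),
    (∀ i, IsLatticePoint (b i)) ∧ (V : Set (Fin N → ℝ)) ⊆ Set.range b ∧
    ∃ M : Matrix (Fin N) (Fin N) ℤ, IsUnit M.det ∧
      ∀ i j, b i.succ j - b 0 j = (M i j : ℝ)

/-- A maximal simplex of a triangulation. -/
def IsMaximalFace (T : Triangulation N P) (V : Finset (Fin N → ℝ)) : Prop :=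
  V ∈ T.faces ∧ ∀ W ∈ T.faces, V ⊆ W → W = V

/-- A weight function witnessing regularity: a `T`-piecewise-affine convex function whose
restrictions to distinct maximal simplices are distinct affine functions. -/
def IsWeightFunction (T : Triangulation N P) (φ : (Fin N → ℝ) → ℝ) : Prop :=
  ConvexOn ℝ P φ ∧
  ∃ g : Finset (Fin N → ℝ) → ((Fin N → ℝ) →ᵃ[ℝ] ℝ),
    (∀ V ∈ T.faces, ∀ x ∈ convexHull ℝ (V : Set (Fin N → ℝ)), φ x = g V x) ∧
    ∀ V W : Finset (Fin N → ℝ), T.IsMaximalFace V → T.IsMaximalFace W → V ≠ W → g V ≠ g W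

/-- A triangulation is regular if it admits a weight function. -/
def IsRegular (T : Triangulation N P) : Prop := ∃ φ, T.IsWeightFunction φ

/-- The closed star of a point in a triangulation. -/
def clstar (T : Triangulation N P) (p : Fin N → ℝ) : Set (Fin N → ℝ) :=
  ⋃ V ∈ {V ∈ T.faces | p ∈ convexHull ℝ (V : Set (Fin N → ℝ))},
    convexHull ℝ (V : Set (Fin N → ℝ))

/-- The ibip ("induced by interior points") condition for a triangulation of a
`d`-dimensional polytope. -/
def IsIbip (T : Triangulation N P) (d : ℕ) : Prop :=
  (∀ p ∈ intrinsicFrontier ℝ P, IsLatticePoint p →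
    ∃ q ∈ intrinsicInterior ℝ P, IsLatticePoint q ∧
      ∃ V ∈ T.faces, (V : Set (Fin N → ℝ)) = {p, q}) ∧
  (∀ (r : ℕ) (ps : Fin (r + 1) → (Fin N → ℝ)),
    (∀ i, ps i ∈ intrinsicInterior ℝ P ∧ IsLatticePoint (ps i)) →
    setDim (⋂ i, T.clstar (ps i)) = d) ∧
  (∀ p ∈ intrinsicInterior ℝ P, IsLatticePoint p →
    ∃ S : Finset (Fin N → ℝ), T.clstar p = convexHull ℝ (S : Set (Fin N → ℝ)))

end Triangulation

/-- Number of lattice points of the `k`-th dilate of `P`. -/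
def ehrhartCount {N : ℕ} (P : Set (Fin N → ℝ)) (k : ℕ) : ℕ :=
  Nat.card ↥(latticePoints ((k : ℝ) • P))

/-- `δ` is the δ-vector of a `d`-dimensional polytope `P`:
`∑_k |kP ∩ ℤ^N| t^k = (δ_0 + δ_1 t + ⋯ + δ_d t^d)/(1-t)^{d+1}`, encoded by clearing the
denominator (note that `1 - t` is invertible in `ℤ⟦t⟧`). -/
def IsDeltaVector {N : ℕ} (P : Set (Fin N → ℝ)) (d : ℕ) (δ : ℕ → ℤ) : Prop :=
  (∀ i, d < i → δ i = 0) ∧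
  (PowerSeries.mk fun k => (ehrhartCount P k : ℤ)) * (1 - PowerSeries.X) ^ (d + 1) =
    PowerSeries.mk fun i => δ i

/-- The ideal `I` of nonfaces: generated by the monomials `x_{p_1} ⋯ x_{p_r}` such that
`conv{p_1, …, p_r}` is not a simplex of the complex with face set `F`. -/
def nonfaceIdeal {N : ℕ} (P : Set (Fin N → ℝ)) (F : Set (Finset (Fin N → ℝ))) :
    Ideal (MvPolynomial (latticePoints P) ℂ) :=
  Ideal.span {m | ∃ S : Finset (latticePoints P),
    (¬ ∃ V ∈ F, (V : Set (Fin N → ℝ)) = Subtype.val '' (S : Set (latticePoints P))) ∧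
    m = ∏ p ∈ S, X p}

/-- The linear form `∑_{p ∈ P ∩ ℤ^N} φ(p)·x_p` attached to the affine function
`φ(x) = c + ∑ a_i x_i` on `ℤ^N`. -/
def affineFormPoly {N : ℕ} (P : Set (Fin N → ℝ)) (c : ℤ) (a : Fin N → ℤ) :
    MvPolynomial (latticePoints P) ℂ :=
  ∑ᶠ p : latticePoints P, (((c : ℂ) + ∑ i, (a i : ℂ) * ((p : Fin N → ℝ) i : ℂ))) • X p

/-- The ideal `J` generated by the linear forms attached to all affine functions
`ℤ^N → ℤ`. -/
def linearIdeal {N : ℕ} (P : Set (Fin N → ℝ)) : Ideal (MvPolynomial (latticePoints P) ℂ) :=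
  Ideal.span (Set.range fun ca : ℤ × (Fin N → ℤ) => affineFormPoly P ca.1 ca.2)

/-- The Stanley–Reisner ring of the simplicial complex with face set `F`. -/
abbrev SRRing {N : ℕ} (P : Set (Fin N → ℝ)) (F : Set (Finset (Fin N → ℝ))) :=
  MvPolynomial (latticePoints P) ℂ ⧸ nonfaceIdeal P F

/-- The Chow ring `A^*` of the simplicial complex with face set `F`. -/
abbrev ChowRing {N : ℕ} (P : Set (Fin N → ℝ)) (F : Set (Finset (Fin N → ℝ))) :=
  MvPolynomial (latticePoints P) ℂ ⧸ (nonfaceIdeal P F + linearIdeal P)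

/-- The degree-`i` graded component `A^i` of the Chow ring. -/
def chowComponent {N : ℕ} (P : Set (Fin N → ℝ)) (F : Set (Finset (Fin N → ℝ))) (i : ℕ) :
    Submodule ℂ (ChowRing P F) :=
  Submodule.map (Ideal.Quotient.mkₐ ℂ (nonfaceIdeal P F + linearIdeal P)).toLinearMap
    (homogeneousSubmodule (latticePoints P) ℂ i)

lemma nonfaceIdeal_mono {N : ℕ} (P : Set (Fin N → ℝ)) {F F' : Set (Finset (Fin N → ℝ))}
    (h : F' ⊆ F) : nonfaceIdeal P F ≤ nonfaceIdeal P F' := by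
  apply Ideal.span_mono
  rintro m ⟨S, hS, rfl⟩
  exact ⟨S, fun ⟨V, hV, he⟩ => hS ⟨V, h hV, he⟩, rfl⟩

/-- The restriction map between Stanley–Reisner rings of a complex and a subcomplex,
sending `x_p` to `x_p` when `p` belongs to the subcomplex and to `0` otherwise. -/
def srRestrict {N : ℕ} (P : Set (Fin N → ℝ)) {F F' : Set (Finset (Fin N → ℝ))}
    (h : F' ⊆ F) : SRRing P F →+* SRRing P F' :=
  Ideal.Quotient.factor (nonfaceIdeal_mono P h)

/-- The restriction map between Chow rings of a complex and a subcomplex. -/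
def chowRestrict {N : ℕ} (P : Set (Fin N → ℝ)) {F F' : Set (Finset (Fin N → ℝ))}
    (h : F' ⊆ F) : ChowRing P F →+* ChowRing P F' :=
  Ideal.Quotient.factor (sup_le_sup_right (nonfaceIdeal_mono P h) _)

/-- The faces of `T` contained in the region `Q`; this is the induced triangulation
`T|_Q` of a subpolytope `Q` which is a union of simplices of `T`. -/
def Triangulation.restrictFaces {N : ℕ} {P : Set (Fin N → ℝ)} (T : Triangulation N P)
    (Q : Set (Fin N → ℝ)) : Set (Finset (Fin N → ℝ)) :=
  {V ∈ T.faces | convexHull ℝ (V : Set (Fin N → ℝ)) ⊆ Q}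

lemma Triangulation.restrictFaces_subset {N : ℕ} {P : Set (Fin N → ℝ)}
    (T : Triangulation N P) (Q : Set (Fin N → ℝ)) : T.restrictFaces Q ⊆ T.faces :=
  fun _ hV => hV.1

lemma Triangulation.restrictFaces_mono {N : ℕ} {P : Set (Fin N → ℝ)} (T : Triangulation N P)
    {Q Q' : Set (Fin N → ℝ)} (h : Q ⊆ Q') : T.restrictFaces Q ⊆ T.restrictFaces Q' :=
  fun _ hV => ⟨hV.1, hV.2.trans h⟩

/-- The interior lattice points of `P`. -/
abbrev IntPts {N : ℕ} (P : Set (Fin N → ℝ)) : Type :=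
  {x : Fin N → ℝ // x ∈ intrinsicInterior ℝ P ∧ IsLatticePoint x}

end EhrhartChow

namespace EhrhartChow

lemma latticePoints_finite {N : ℕ} {P : Set (Fin N → ℝ)} (hP : IsLatticePolytope P) :
    (latticePoints P).Finite := by
  classical
  obtain ⟨S, -, rfl⟩ := hP
  have hb : Bornology.IsBounded (convexHull ℝ (S : Set (Fin N → ℝ))) :=
    isBounded_convexHull.2 S.finite_toSet.isBounded
  obtain ⟨R, hR⟩ := hb.subset_closedBall 0
  set c : (Fin N → ℤ) → (Fin N → ℝ) := fun z i => (z i : ℝ) with hc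
  have hboxfin : (c ⁻¹' Metric.closedBall 0 R).Finite := by
    apply (Set.Finite.pi (fun i : Fin N => Set.finite_Icc (-⌈R⌉) ⌈R⌉)).subset
    intro z hz
    have hnorm : ‖c z‖ ≤ R := by
      simpa [dist_zero_right] using Metric.mem_closedBall.1 hz
    intro i _
    have h1 : |(z i : ℝ)| ≤ R := le_trans (norm_le_pi_norm (c z) i) hnorm
    have h2 : (z i : ℝ) ≤ (⌈R⌉ : ℝ) := le_trans (le_trans (le_abs_self _) h1) (Int.le_ceil R)
    obtain ⟨hl, hr⟩ := abs_le.1 h1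
    have h3 : ((-⌈R⌉ : ℤ) : ℝ) ≤ (z i : ℝ) := by
      push_cast
      linarith [Int.le_ceil R]
    exact Set.mem_Icc.2 ⟨by exact_mod_cast h3, by exact_mod_cast h2⟩
  apply ((hboxfin.image c)).subset
  rintro x ⟨hx, hlatx⟩
  refine ⟨fun i => (hlatx i).choose, ?_, ?_⟩
  · have hcz : c (fun i => (hlatx i).choose) = x := by
      funext i; exact ((hlatx i).choose_spec).symm
    simpa [Set.mem_preimage, hcz] using hR hx
  · funext i; exact ((hlatx i).choose_spec).symm

/-- The image of the variable `x_{p''}` under the pullback: `x_{ψ⁻¹(p'')}` if `p''` lies in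
the image of `ψ`, and `0` otherwise. -/
def pullbackVar {N M : ℕ} (ψ : (Fin N → ℝ) →ᵃ[ℝ] (Fin M → ℝ))
    (P' : Set (Fin N → ℝ)) (P'' : Set (Fin M → ℝ)) (q : latticePoints P'') :
    MvPolynomial (latticePoints P') ℂ :=
  open Classical in
  if h : ∃ p : latticePoints P', ψ (p : Fin N → ℝ) = (q : Fin M → ℝ) then X h.choose else 0

/-- The pullback `ψ^*` on polynomial rings, defined on generators by
`ψ^*(x_{p''}) = x_{ψ⁻¹(p'')}` if `p''` is in the image of `ψ` and `0` otherwise. -/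
def pullbackHom {N M : ℕ} (ψ : (Fin N → ℝ) →ᵃ[ℝ] (Fin M → ℝ))
    (P' : Set (Fin N → ℝ)) (P'' : Set (Fin M → ℝ)) :
    MvPolynomial (latticePoints P'') ℂ →ₐ[ℂ] MvPolynomial (latticePoints P') ℂ :=
  aeval (pullbackVar ψ P' P'')

/-- **Proposition (pullbacks along embeddings of triangulations).** If an injective
`ℤ`-affine map `ψ` carries every simplex of `T'` affine-isomorphically onto a simplex of
`T''`, then `ψ^*(I'') ⊆ I'` and `ψ^*(J'') ⊆ J'`, so `ψ^*` induces a graded `ℂ`-algebra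
homomorphism `A^*(T'') → A^*(T')`. -/
theorem pullback_chowRing {N M : ℕ} {P' : Set (Fin N → ℝ)} {P'' : Set (Fin M → ℝ)}
    (hP' : IsLatticePolytope P') (hP'' : IsLatticePolytope P'')
    (T' : Triangulation N P') (T'' : Triangulation M P'')
    (hu' : T'.IsUnimodular) (hu'' : T''.IsUnimodular)
    (ψ : (Fin N → ℝ) →ᵃ[ℝ] (Fin M → ℝ)) (hinj : Function.Injective ψ)
    (hlat : ∀ x : Fin N → ℝ, IsLatticePoint x → IsLatticePoint (ψ x))
    (hsim : ∀ V ∈ T'.faces, ∃ W ∈ T''.faces,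
      (W : Set (Fin M → ℝ)) = ψ '' (V : Set (Fin N → ℝ))) :
    (∀ f ∈ nonfaceIdeal P'' T''.faces, pullbackHom ψ P' P'' f ∈ nonfaceIdeal P' T'.faces) ∧
    (∀ f ∈ linearIdeal P'', pullbackHom ψ P' P'' f ∈ linearIdeal P') ∧
    ∃ Ψ : ChowRing P'' T''.faces →ₐ[ℂ] ChowRing P' T'.faces,
      (∀ f : MvPolynomial (latticePoints P'') ℂ,
        Ψ (Ideal.Quotient.mk _ f) = Ideal.Quotient.mk _ (pullbackHom ψ P' P'' f)) ∧
      ∀ i : ℕ, ∀ x ∈ chowComponent P'' T''.faces i, Ψ x ∈ chowComponent P' T'.faces i := by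
  classical
  -- ψ maps P' into P''
  have hpsiP : ∀ x ∈ P', ψ x ∈ P'' := by
    intro x hx
    rw [← T'.union_eq] at hx
    obtain ⟨V, hV, hxV⟩ := Set.mem_iUnion₂.1 hx
    obtain ⟨W, hW, hWe⟩ := hsim V hV
    have hmem : ψ x ∈ convexHull ℝ (W : Set (Fin M → ℝ)) := by
      rw [hWe, ← AffineMap.image_convexHull]
      exact ⟨x, hxV, rfl⟩
    rw [← T''.union_eq]
    exact Set.mem_iUnion₂.2 ⟨W, hW, hmem⟩
  have hpsiLP : ∀ p : latticePoints P', ψ (p : Fin N → ℝ) ∈ latticePoints P'' :=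
    fun p => ⟨hpsiP _ p.2.1, hlat _ p.2.2⟩
  -- rewriting lemmas for pullbackVar
  have hvar_pos : ∀ (q : latticePoints P'') (p : latticePoints P'),
      ψ (p : Fin N → ℝ) = (q : Fin M → ℝ) → pullbackVar ψ P' P'' q = X p := by
    intro q p h
    have he : ∃ p : latticePoints P', ψ (p : Fin N → ℝ) = (q : Fin M → ℝ) := ⟨p, h⟩
    rw [pullbackVar, dif_pos he]
    congr 1
    exact Subtype.ext (hinj (he.choose_spec.trans h.symm))
  have hvar_neg : ∀ q : latticePoints P'',
      (¬ ∃ p : latticePoints P', ψ (p : Fin N → ℝ) = (q : Fin M → ℝ)) →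
      pullbackVar ψ P' P'' q = 0 := by
    intro q h; rw [pullbackVar, dif_neg h]
  -- Part I : nonface ideal
  have hI : ∀ f ∈ nonfaceIdeal P'' T''.faces, pullbackHom ψ P' P'' f ∈ nonfaceIdeal P' T'.faces := by
    have hcomap : nonfaceIdeal P'' T''.faces ≤
        Ideal.comap (pullbackHom ψ P' P'').toRingHom (nonfaceIdeal P' T'.faces) := by
      rw [nonfaceIdeal, Ideal.span_le]
      rintro m ⟨S, hS, rfl⟩
      simp only [SetLike.mem_coe, Ideal.mem_comap, AlgHom.toRingHom_eq_coe, RingHom.coe_coe,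
        map_prod]
      have hXa : ∀ q : latticePoints P'',
          pullbackHom ψ P' P'' (X q) = pullbackVar ψ P' P'' q := fun q => aeval_X _ q
      by_cases hall : ∀ q ∈ S, ∃ p : latticePoints P', ψ (p : Fin N → ℝ) = (q : Fin M → ℝ)
      · choose g hg using hall
        have hprod : (∏ q ∈ S, pullbackHom ψ P' P'' (X q)) =
            ∏ q ∈ S.attach, X (g q.1 q.2) := by
          rw [← Finset.prod_attach S (fun q => pullbackHom ψ P' P'' (X q))]
          exact Finset.prod_congr rfl fun q _ => by
            rw [hXa, hvar_pos q.1 (g q.1 q.2) (hg q.1 q.2)]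
        have hginj : Function.Injective (fun q : {x // x ∈ S} => g q.1 q.2) := by
          intro q1 q2 h12
          have : ψ ((g q1.1 q1.2 : latticePoints P') : Fin N → ℝ) =
              ψ ((g q2.1 q2.2 : latticePoints P') : Fin N → ℝ) := by
            simp only at h12; rw [h12]
          rw [hg q1.1 q1.2, hg q2.1 q2.2] at this
          exact Subtype.ext (Subtype.ext this)
        set S' : Finset (latticePoints P') := S.attach.image (fun q => g q.1 q.2) with hS'
        have hprod2 : (∏ q ∈ S, pullbackHom ψ P' P'' (X q)) = ∏ p ∈ S', X p := by
          rw [hprod, hS', Finset.prod_image (fun a _ b _ h => hginj h)]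
        rw [hprod2]
        apply Ideal.subset_span
        refine ⟨S', ?_, rfl⟩
        rintro ⟨V, hV, hVe⟩
        obtain ⟨W, hW, hWe⟩ := hsim V hV
        apply hS
        refine ⟨W, hW, ?_⟩
        rw [hWe, hVe]
        ext x
        constructor
        · rintro ⟨y, ⟨p, hpS', rfl⟩, rfl⟩
          obtain ⟨q, -, rfl⟩ := Finset.mem_image.1 hpS'
          exact ⟨q.1, by simp, (hg q.1 q.2).symm ▸ rfl⟩
        · rintro ⟨q, hqS, rfl⟩
          have hqS' : q ∈ (S : Set (latticePoints P'')) := hqS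
          refine ⟨(g q hqS : Fin N → ℝ), ⟨g q hqS, ?_, rfl⟩, hg q hqS⟩
          exact Finset.mem_image.2 ⟨⟨q, hqS⟩, Finset.mem_attach _ _, rfl⟩
      · push_neg at hall
        obtain ⟨q, hqS, hq⟩ := hall
        have : (∏ q ∈ S, pullbackHom ψ P' P'' (X q)) = 0 :=
          Finset.prod_eq_zero hqS (by rw [hXa, hvar_neg q (by push_neg; exact hq)])
        rw [this]; exact Ideal.zero_mem _
    exact fun f hf => Ideal.mem_comap.1 (hcomap hf)
  -- finiteness of lattice points
  haveI : Fintype (latticePoints P') := (latticePoints_finite hP').fintype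
  haveI : Fintype (latticePoints P'') := (latticePoints_finite hP'').fintype
  -- the embedding of lattice points
  set ι : latticePoints P' → latticePoints P'' := fun p => ⟨ψ (p : Fin N → ℝ), hpsiLP p⟩ with hι
  have hιinj : Function.Injective ι := by
    intro p1 p2 h
    exact Subtype.ext (hinj (congrArg Subtype.val h))
  -- the affine data of ψ as integers
  have hz0 : IsLatticePoint (0 : Fin N → ℝ) := fun i => ⟨0, by simp⟩
  have hze : ∀ i : Fin N, IsLatticePoint (fun k => if i = k then (1 : ℝ) else 0) := by
    intro i k
    by_cases h : i = k
    · exact ⟨1, by simp [h]⟩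
    · exact ⟨0, by simp [h]⟩
  choose w0 hw0 using hlat 0 hz0
  choose u hu using fun i => hlat _ (hze i)
  -- the composed affine function
  have hcomp : ∀ x : Fin N → ℝ, ∀ j, ψ x j =
      (∑ i, x i * ((u i j : ℝ) - (w0 j : ℝ))) + (w0 j : ℝ) := by
    intro x j
    have hdec : ∀ y : Fin N → ℝ, ψ y = ψ.linear y + ψ 0 := by
      intro y
      have := ψ.decomp
      rw [this]
      simp [Function.const]
    have hlin : ψ.linear x = ∑ i, x i • ψ.linear (fun k => if i = k then (1 : ℝ) else 0) := by
      conv_lhs => rw [pi_eq_sum_univ x]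
      rw [map_sum]
      exact Finset.sum_congr rfl fun i _ => by rw [LinearMap.map_smul]
    have hline : ∀ i, ψ.linear (fun k => if i = k then (1 : ℝ) else 0) j =
        (u i j : ℝ) - (w0 j : ℝ) := by
      intro i
      have h1 := congrFun (hdec (fun k => if i = k then (1 : ℝ) else 0)) j
      rw [hu i j] at h1
      have h2 : ψ 0 j = (w0 j : ℝ) := hw0 j
      simp only [Pi.add_apply] at h1
      linarith
    have := congrFun (hdec x) j
    rw [this]
    simp only [Pi.add_apply, hlin, hw0 j]
    rw [Finset.sum_apply]
    congr 1
    exact Finset.sum_congr rfl fun i _ => by rw [Pi.smul_apply, smul_eq_mul, hline i]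
  -- Part J : linear ideal
  have hJ : ∀ f ∈ linearIdeal P'', pullbackHom ψ P' P'' f ∈ linearIdeal P' := by
    have hcomap : linearIdeal P'' ≤
        Ideal.comap (pullbackHom ψ P' P'').toRingHom (linearIdeal P') := by
      rw [linearIdeal, Ideal.span_le]
      rintro - ⟨⟨c, a⟩, rfl⟩
      simp only [SetLike.mem_coe, Ideal.mem_comap, AlgHom.toRingHom_eq_coe, RingHom.coe_coe]
      set c' : ℤ := c + ∑ j, a j * w0 j with hc'
      set a' : Fin N → ℤ := fun i => ∑ j, a j * (u i j - w0 j) with ha'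
      have hkey : ∀ x : Fin N → ℝ,
          ((c' : ℂ) + ∑ i, (a' i : ℂ) * ((x i : ℝ) : ℂ)) =
          ((c : ℂ) + ∑ j, (a j : ℂ) * (((ψ x) j : ℝ) : ℂ)) := by
        intro x
        have hr : ((c' : ℝ) + ∑ i, (a' i : ℝ) * x i) =
            ((c : ℝ) + ∑ j, (a j : ℝ) * (ψ x) j) := by
          simp only [hc', ha', hcomp x]
          push_cast
          simp only [mul_add, Finset.sum_add_distrib, Finset.mul_sum, Finset.sum_mul]
          rw [Finset.sum_comm]
          ring_nf
          congr 1
          exact Finset.sum_congr rfl fun j _ => Finset.sum_congr rfl fun i _ => by ring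
        calc ((c' : ℂ) + ∑ i, (a' i : ℂ) * ((x i : ℝ) : ℂ))
            = (((c' : ℝ) + ∑ i, (a' i : ℝ) * x i : ℝ) : ℂ) := by push_cast; ring
          _ = (((c : ℝ) + ∑ j, (a j : ℝ) * (ψ x) j : ℝ) : ℂ) := by rw [hr]
          _ = ((c : ℂ) + ∑ j, (a j : ℂ) * (((ψ x) j : ℝ) : ℂ)) := by push_cast; ring
      have hmap : pullbackHom ψ P' P'' (affineFormPoly P'' c a) = affineFormPoly P' c' a' := by
        rw [affineFormPoly, affineFormPoly, finsum_eq_sum_of_fintype, finsum_eq_sum_of_fintype,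
          map_sum]
        have hterm : ∀ q : latticePoints P'',
            pullbackHom ψ P' P''
              ((((c : ℂ) + ∑ j, (a j : ℂ) * ((q : Fin M → ℝ) j : ℂ))) • X q) =
            (((c : ℂ) + ∑ j, (a j : ℂ) * ((q : Fin M → ℝ) j : ℂ))) • pullbackVar ψ P' P'' q := by
          intro q
          rw [map_smul, show pullbackHom ψ P' P'' (X q) = pullbackVar ψ P' P'' q from aeval_X _ q]
        rw [Finset.sum_congr rfl fun q _ => hterm q]
        rw [← Finset.sum_subset (Finset.subset_univ (Finset.univ.image ι)) ?van]
        case van =>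
          intro q _ hq
          have : ¬ ∃ p : latticePoints P', ψ (p : Fin N → ℝ) = (q : Fin M → ℝ) := by
            rintro ⟨p, hp⟩
            exact hq (Finset.mem_image.2 ⟨p, Finset.mem_univ _, Subtype.ext hp⟩)
          rw [hvar_neg q this, smul_zero]
        rw [Finset.sum_image (fun p _ p' _ h => hιinj h)]
        exact Finset.sum_congr rfl fun p _ => by
          rw [hvar_pos (ι p) p rfl, ← hkey (p : Fin N → ℝ)]
      rw [hmap, linearIdeal]
      exact Ideal.subset_span ⟨(c', a'), rfl⟩
    exact fun f hf => Ideal.mem_comap.1 (hcomap hf)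
  refine ⟨hI, hJ, ?_⟩
  -- the induced map on Chow rings
  have hker : ∀ f ∈ nonfaceIdeal P'' T''.faces + linearIdeal P'',
      ((Ideal.Quotient.mkₐ ℂ (nonfaceIdeal P' T'.faces + linearIdeal P')).comp
        (pullbackHom ψ P' P'')) f = 0 := by
    intro f hf
    obtain ⟨g1, hg1, g2, hg2, rfl⟩ := Submodule.mem_sup.1 hf
    simp only [AlgHom.comp_apply, map_add, Ideal.Quotient.mkₐ_eq_mk]
    have h1 : pullbackHom ψ P' P'' g1 ∈ nonfaceIdeal P' T'.faces + linearIdeal P' := by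
      rw [Submodule.add_eq_sup]; exact Ideal.mem_sup_left (hI g1 hg1)
    have h2 : pullbackHom ψ P' P'' g2 ∈ nonfaceIdeal P' T'.faces + linearIdeal P' := by
      rw [Submodule.add_eq_sup]; exact Ideal.mem_sup_right (hJ g2 hg2)
    rw [Ideal.Quotient.eq_zero_iff_mem.2 h1, Ideal.Quotient.eq_zero_iff_mem.2 h2, add_zero]
  refine ⟨Ideal.Quotient.liftₐ (nonfaceIdeal P'' T''.faces + linearIdeal P'')
    ((Ideal.Quotient.mkₐ ℂ (nonfaceIdeal P' T'.faces + linearIdeal P')).comp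
      (pullbackHom ψ P' P'')) hker, ?_, ?_⟩
  · intro f
    rw [Ideal.Quotient.liftₐ_apply]
    rfl
  · intro i x hx
    obtain ⟨f, hf, rfl⟩ := hx
    have hhom : (pullbackHom ψ P' P'' f).IsHomogeneous i := by
      have hf' : f.IsHomogeneous i := (mem_homogeneousSubmodule _ _).1 hf
      have := hf'.aeval (pullbackVar ψ P' P'') (n := 1) ?_
      · simpa [one_mul, pullbackHom] using this
      · intro q
        by_cases h : ∃ p : latticePoints P', ψ (p : Fin N → ℝ) = (q : Fin M → ℝ)
        · obtain ⟨p, hp⟩ := h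
          rw [hvar_pos q p hp]
          exact isHomogeneous_X _ _
        · rw [hvar_neg q h]
          exact isHomogeneous_zero _ _ _
    refine ⟨pullbackHom ψ P' P'' f, (mem_homogeneousSubmodule _ _).2 hhom, ?_⟩
    rw [Ideal.Quotient.liftₐ_apply]
    simp only [AlgHom.toLinearMap_apply, Ideal.Quotient.mkₐ_eq_mk, Ideal.Quotient.lift_mk]
    rfl




end EhrhartChow
end
end

section
/- Let P ⊂ ℝ^d be a d-dimensional lattice polytope whose unique interior lattice point is the origin 0, and let T be a regular, unimodular, star triangulation of P centered at 0. Let R = ℂ[x_p : p ∈ ∂P ∩ ℤ^d]/(I_Σ + J_Σ), where I_Σ is the ideal generated by all monomials x_{p_1}⋯x_{p_r} with p_1,…,p_r ∈ ∂P ∩ ℤ^d and conv{p_1,…,p_r} ∉ T, and J_Σ is the ideal generated by the linear forms ∑_{p ∈ ∂P ∩ ℤ^d} φ(p)·x_p over all linear functions φ : ℤ^d → ℤ. Then the ℂ-algebra homomorphism ψ : ℂ[x_p : p ∈ P ∩ ℤ^d] → ℂ[x_p : p ∈ ∂P ∩ ℤ^d] defined by ψ(x_0) = −∑_{p ∈ (P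 ∩ ℤ^d)∖{0}} x_p and ψ(x_p) = x_p for p ∈ ∂P ∩ ℤ^d satisfies ψ(I) = I_Σ and ψ(J) = J_Σ, and induces a graded ℂ-algebra isomorphism A*(T) ≅ R. -/
open scoped BigOperators Pointwise
open MvPolynomial

noncomputable section

namespace EhrhartChow

/-- The lattice points on the relative boundary of `P`. -/
def bdryLatticePoints {N : ℕ} (P : Set (Fin N → ℝ)) : Set (Fin N → ℝ) :=
  {x | x ∈ intrinsicFrontier ℝ P ∧ IsLatticePoint x}

/-- The Stanley–Reisner ideal `I_Σ` on the boundary variables. -/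
def bdryNonfaceIdeal {N : ℕ} (P : Set (Fin N → ℝ)) (F : Set (Finset (Fin N → ℝ))) :
    Ideal (MvPolynomial (bdryLatticePoints P) ℂ) :=
  Ideal.span {m | ∃ S : Finset (bdryLatticePoints P),
    (¬ ∃ V ∈ F, (V : Set (Fin N → ℝ)) = Subtype.val '' (S : Set (bdryLatticePoints P))) ∧
    m = ∏ p ∈ S, X p}

/-- The linear form `∑_{p ∈ ∂P ∩ ℤ^d} φ(p)·x_p` attached to the linear function
`φ(x) = ∑ a_i x_i`. -/
def bdryLinearForm {N : ℕ} (P : Set (Fin N → ℝ)) (a : Fin N → ℤ) :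
    MvPolynomial (bdryLatticePoints P) ℂ :=
  ∑ᶠ p : bdryLatticePoints P, (∑ i, (a i : ℂ) * ((p : Fin N → ℝ) i : ℂ)) • X p

/-- The ideal `J_Σ` generated by the linear forms attached to all linear functions
`ℤ^d → ℤ`. -/
def bdryLinearIdeal {N : ℕ} (P : Set (Fin N → ℝ)) :
    Ideal (MvPolynomial (bdryLatticePoints P) ℂ) :=
  Ideal.span (Set.range (bdryLinearForm P))

/-- The ring `R = ℂ[x_p : p ∈ ∂P ∩ ℤ^d]/(I_Σ + J_Σ)`. -/
abbrev BdryRing {N : ℕ} (P : Set (Fin N → ℝ)) (F : Set (Finset (Fin N → ℝ))) :=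
  MvPolynomial (bdryLatticePoints P) ℂ ⧸ (bdryNonfaceIdeal P F + bdryLinearIdeal P)

/-- The degree-`i` graded component of `BdryRing`. -/
def bdryComponent {N : ℕ} (P : Set (Fin N → ℝ)) (F : Set (Finset (Fin N → ℝ))) (i : ℕ) :
    Submodule ℂ (BdryRing P F) :=
  Submodule.map (Ideal.Quotient.mkₐ ℂ (bdryNonfaceIdeal P F + bdryLinearIdeal P)).toLinearMap
    (homogeneousSubmodule (bdryLatticePoints P) ℂ i)

/-- The value of `ψ` on the variable `x_p`: `ψ(x_0) = -∑_{q ∈ ∂P ∩ ℤ^d} x_q` and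
`ψ(x_p) = x_p` for boundary points `p`. -/
def starVar {N : ℕ} (P : Set (Fin N → ℝ)) (p : latticePoints P) :
    MvPolynomial (bdryLatticePoints P) ℂ :=
  open Classical in
  if (p : Fin N → ℝ) = 0 then -∑ᶠ q : bdryLatticePoints P, X q
  else if h : (p : Fin N → ℝ) ∈ intrinsicFrontier ℝ P then
    X (⟨(p : Fin N → ℝ), h, p.2.2⟩ : bdryLatticePoints P)
  else 0

/-- The homomorphism `ψ : ℂ[x_p : p ∈ P ∩ ℤ^d] → ℂ[x_p : p ∈ ∂P ∩ ℤ^d]`. -/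
def starMap {N : ℕ} (P : Set (Fin N → ℝ)) :
    MvPolynomial (latticePoints P) ℂ →ₐ[ℂ] MvPolynomial (bdryLatticePoints P) ℂ :=
  aeval (starVar P)

/-- `T` is a star triangulation of `P` centered at `o`: every simplex either lies in the
relative boundary or is the cone over a boundary simplex with apex `o`, and the cone over
every boundary simplex belongs to `T`. -/
def Triangulation.IsStarAt {N : ℕ} {P : Set (Fin N → ℝ)} (T : Triangulation N P)
    (o : Fin N → ℝ) : Prop :=
  (∀ V ∈ T.faces, convexHull ℝ (V : Set (Fin N → ℝ)) ⊆ intrinsicFrontier ℝ P ∨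
    ∃ W ∈ T.faces, convexHull ℝ (W : Set (Fin N → ℝ)) ⊆ intrinsicFrontier ℝ P ∧
      (V : Set (Fin N → ℝ)) = insert o (W : Set (Fin N → ℝ))) ∧
  (∀ W ∈ T.faces, convexHull ℝ (W : Set (Fin N → ℝ)) ⊆ intrinsicFrontier ℝ P →
    ∃ V ∈ T.faces, (V : Set (Fin N → ℝ)) = insert o (W : Set (Fin N → ℝ)))

section Aux

variable {d : ℕ} {P : Set (Fin d → ℝ)}

lemma latticePoints_finite_s6 (h : Bornology.IsBounded P) : (latticePoints P).Finite := by
  obtain ⟨R, hR⟩ := h.subset_closedBall 0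
  have hsub : latticePoints P ⊆
      (fun z : Fin d → ℤ => fun i => (z i : ℝ)) ''
        Set.Icc (fun _ => -⌈R⌉) (fun _ => ⌈R⌉) := by
    rintro x ⟨hxP, hlat⟩
    choose z hz using hlat
    have hxnorm : ‖x‖ ≤ R := by
      simpa [Metric.mem_closedBall, dist_eq_norm] using hR hxP
    have habs : ∀ i, |x i| ≤ R := fun i => by
      calc |x i| = ‖x i‖ := (Real.norm_eq_abs _).symm
        _ ≤ ‖x‖ := norm_le_pi_norm x i
        _ ≤ R := hxnorm
    refine ⟨z, ⟨fun i => ?_, fun i => ?_⟩, (funext fun i => (hz i)).symm⟩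
    · have : ((-⌈R⌉ : ℤ) : ℝ) ≤ (z i : ℝ) := by
        push_cast [Int.cast_neg]
        have h1 := (abs_le.mp (habs i)).1
        have h2 := Int.le_ceil R
        rw [hz i] at h1
        linarith
      exact_mod_cast this
    · have : ((z i : ℤ) : ℝ) ≤ ((⌈R⌉ : ℤ) : ℝ) := by
        have h1 := (abs_le.mp (habs i)).2
        have h2 := Int.le_ceil R
        rw [hz i] at h1
        push_cast
        linarith
      exact_mod_cast this
  exact ((Set.finite_Icc _ _).image _).subset hsub

/-- Splitting a finite sum over a type equivalent to `Option β`. -/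
lemma finsum_option_split {γ β M : Type} [AddCommMonoid M] [Fintype β] (E : γ ≃ Option β)
    (f : γ → M) : ∑ᶠ p, f p = f (E.symm none) + ∑ᶠ q : β, f (E.symm (some q)) := by
  classical
  haveI : Fintype γ := Fintype.ofEquiv _ E.symm
  rw [finsum_eq_sum_of_fintype, finsum_eq_sum_of_fintype,
    ← Equiv.sum_comp E.symm f, univ_option, Finset.sum_insertNone]

end Aux

/-- **Proposition (Chow ring of a star triangulation of a reflexive-type polytope).**
If `P ⊆ ℝ^d` is a full-dimensional lattice `d`-polytope whose unique interior lattice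
point is the origin and `T` is a regular, unimodular star triangulation of `P` centered
at `0`, then `ψ(I) = I_Σ`, `ψ(J) = J_Σ`, and `ψ` induces a graded isomorphism
`A^*(T) ≅ ℂ[x_p : p ∈ ∂P ∩ ℤ^d]/(I_Σ + J_Σ)`. -/
theorem chowRing_star_triangulation {d : ℕ} (P : Set (Fin d → ℝ))
    (hP : IsLatticePolytope P) (hd : setDim P = d)
    (h0 : {x | x ∈ intrinsicInterior ℝ P ∧ IsLatticePoint x} = {(0 : Fin d → ℝ)})
    (T : Triangulation d P) (hreg : T.IsRegular) (huni : T.IsUnimodular)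
    (hstar : T.IsStarAt 0) :
    Ideal.map (starMap P) (nonfaceIdeal P T.faces) = bdryNonfaceIdeal P T.faces ∧
    Ideal.map (starMap P) (linearIdeal P) = bdryLinearIdeal P ∧
    ∃ e : ChowRing P T.faces ≃ₐ[ℂ] BdryRing P T.faces,
      (∀ f : MvPolynomial (latticePoints P) ℂ,
        e (Ideal.Quotient.mk _ f) = Ideal.Quotient.mk _ (starMap P f)) ∧
      ∀ i : ℕ, ∀ x ∈ chowComponent P T.faces i, e x ∈ bdryComponent P T.faces i := by
  classical
  obtain ⟨S0, hS0lat, hPeq⟩ := hP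
  have hPclosed : IsClosed P := hPeq ▸ S0.finite_toSet.isClosed_convexHull ℝ
  have hPbdd : Bornology.IsBounded P :=
    hPeq ▸ (S0.finite_toSet.isCompact_convexHull ℝ).isBounded
  have hAfin : (latticePoints P).Finite := latticePoints_finite_s6 hPbdd
  have hfrP : intrinsicFrontier ℝ P ⊆ P := intrinsicFrontier_subset hPclosed
  have hBA : bdryLatticePoints P ⊆ latticePoints P := fun x hx => ⟨hfrP hx.1, hx.2⟩
  have hBfin : (bdryLatticePoints P).Finite := hAfin.subset hBA
  haveI : Fintype (latticePoints P) := hAfin.fintype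
  haveI : Fintype (bdryLatticePoints P) := hBfin.fintype
  have h0mem : (0 : Fin d → ℝ) ∈ {x | x ∈ intrinsicInterior ℝ P ∧ IsLatticePoint x} := by
    rw [h0]; rfl
  -- interior points are not frontier points
  have hdisj : ∀ x : Fin d → ℝ, x ∈ intrinsicInterior ℝ P → x ∉ intrinsicFrontier ℝ P := by
    intro x hx
    rw [← intrinsicClosure_diff_intrinsicFrontier (𝕜 := ℝ) P] at hx
    exact hx.2
  have h0notfr : (0 : Fin d → ℝ) ∉ intrinsicFrontier ℝ P := hdisj _ h0mem.1
  have hfr_ne0 : ∀ x : Fin d → ℝ, x ∈ intrinsicFrontier ℝ P → x ≠ 0 := by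
    rintro x hx rfl; exact h0notfr hx
  set A := latticePoints P with hA
  set B := bdryLatticePoints P with hBdef
  let z0 : A := ⟨0, intrinsicInterior_subset h0mem.1, h0mem.2⟩
  -- every lattice point of P is 0 or a boundary lattice point
  have hcases : ∀ p : A, (p : Fin d → ℝ) = 0 ∨ (p : Fin d → ℝ) ∈ intrinsicFrontier ℝ P := by
    rintro ⟨x, hxP, hxlat⟩
    by_cases hx : x ∈ intrinsicInterior ℝ P
    · left
      have : x ∈ ({(0 : Fin d → ℝ)} : Set (Fin d → ℝ)) := h0 ▸ ⟨hx, hxlat⟩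
      exact this
    · right
      have hxc : x ∈ intrinsicClosure ℝ P := subset_intrinsicClosure hxP
      rw [← intrinsicClosure_diff_intrinsicInterior (𝕜 := ℝ) P]
      exact ⟨hxc, hx⟩
  let ι : B → A := fun q => ⟨q.1, hfrP q.2.1, q.2.2⟩
  have hι_val : ∀ q : B, ((ι q : A) : Fin d → ℝ) = (q : Fin d → ℝ) := fun _ => rfl
  -- the equivalence A ≃ Option B
  let E : A ≃ Option B :=
    { toFun := fun p => if h : (p : Fin d → ℝ) ∈ intrinsicFrontier ℝ P then
        some ⟨p.1, h, p.2.2⟩ else none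
      invFun := fun o => o.elim z0 ι
      left_inv := by
        rintro p
        dsimp only
        rcases hcases p with h | h
        · rw [dif_neg (by rw [h]; exact h0notfr)]
          exact Subtype.ext h.symm
        · rw [dif_pos h]; rfl
      right_inv := by
        rintro (_ | q) <;> dsimp only
        · exact dif_neg h0notfr
        · exact dif_pos q.2.1 }
  have hEnone : E.symm none = z0 := rfl
  have hEsome : ∀ q : B, E.symm (some q) = ι q := fun _ => rfl
  -- splitting sums over A
  have hsplit : ∀ (M : Type) [AddCommMonoid M] (f : A → M),
      ∑ᶠ p, f p = f z0 + ∑ᶠ q : B, f (ι q) := by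
    intro M _ f
    simpa [hEnone, hEsome] using finsum_option_split E f
  -- values of starVar
  have hstar0 : starVar P z0 = -∑ᶠ q : B, X q := by
    rw [starVar, if_pos rfl]
  have hstarι : ∀ q : B, starVar P (ι q) = X q := by
    intro q
    rw [starVar, if_neg (hfr_ne0 _ q.2.1), dif_pos q.2.1]
  have hstarfr : ∀ (p : A) (h : (p : Fin d → ℝ) ∈ intrinsicFrontier ℝ P),
      starVar P p = X (⟨p.1, h, p.2.2⟩ : B) := by
    intro p h
    rw [starVar, if_neg (hfr_ne0 _ h), dif_pos h]
  have hmapX : ∀ p : A, starMap P (X p) = starVar P p := fun p => aeval_X _ _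
  have hmapι : ∀ q : B, starMap P (X (ι q)) = X q := fun q => by
    rw [hmapX, hstarι]
  -- the key computation on linear forms
  have hpsi_aff : ∀ (c : ℤ) (a : Fin d → ℤ),
      starMap P (affineFormPoly P c a) = bdryLinearForm P a := by
    intro c a
    rw [affineFormPoly, bdryLinearForm, hsplit _ (fun p : A =>
        (((c : ℂ) + ∑ i, (a i : ℂ) * ((p : Fin d → ℝ) i : ℂ))) • X p)]
    rw [finsum_eq_sum_of_fintype, finsum_eq_sum_of_fintype]
    simp only [map_add, map_sum, map_smul, starMap, aeval_X]
    rw [hstar0]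
    have hz0c : ((c : ℂ) + ∑ i, (a i : ℂ) * (((z0 : A) : Fin d → ℝ) i : ℂ)) = (c : ℂ) := by
      have hz : ((z0 : A) : Fin d → ℝ) = 0 := rfl
      rw [hz]; simp
    rw [hz0c]
    have hterm : ∀ q : B, ((c : ℂ) + ∑ i, (a i : ℂ) * (((ι q : A) : Fin d → ℝ) i : ℂ)) •
        starVar P (ι q) = (c : ℂ) • X q + (∑ i, (a i : ℂ) * ((q : Fin d → ℝ) i : ℂ)) • X q := by
      intro q
      rw [hstarι q, hι_val, add_smul]
    rw [Finset.sum_congr rfl fun q _ => hterm q, Finset.sum_add_distrib, smul_neg,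
      finsum_eq_sum_of_fintype, Finset.smul_sum]
    abel
  -- ψ of a monomial with all variables on the boundary
  have hmono : ∀ S : Finset A, (∀ p ∈ S, (p : Fin d → ℝ) ≠ 0) →
      ∃ S' : Finset B,
        Subtype.val '' (S' : Set B) = Subtype.val '' (S : Set A) ∧
        starMap P (∏ p ∈ S, X p) = ∏ q ∈ S', X q := by
    intro S hS
    have hfr : ∀ p : A, p ∈ S → (p : Fin d → ℝ) ∈ intrinsicFrontier ℝ P := by
      intro p hp
      rcases hcases p with h | h
      · exact absurd h (hS p hp)
      · exact h
    refine ⟨S.attach.image (fun x => (⟨x.1.1, hfr x.1 x.2, x.1.2.2⟩ : B)), ?_, ?_⟩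
    · ext y
      constructor
      · rintro ⟨q, hq, rfl⟩
        rw [Finset.mem_coe, Finset.mem_image] at hq
        obtain ⟨x, -, rfl⟩ := hq
        exact ⟨x.1, x.2, rfl⟩
      · rintro ⟨p, hp, rfl⟩
        rw [Finset.mem_coe] at hp
        exact ⟨⟨p.1, hfr p hp, p.2.2⟩,
          Finset.mem_coe.mpr (Finset.mem_image.mpr ⟨⟨p, hp⟩, Finset.mem_attach _ _, rfl⟩), rfl⟩
    · rw [map_prod]
      rw [Finset.prod_image (by
        rintro x - y - h
        exact Subtype.ext (Subtype.ext (congrArg (fun t : B => (t : Fin d → ℝ)) h)))]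
      rw [← Finset.prod_attach S (fun p => starMap P (X p))]
      refine Finset.prod_congr rfl ?_
      rintro ⟨p, hp⟩ -
      show starMap P (X p) = X _
      rw [starMap, aeval_X, hstarfr p (hfr p hp)]
  -- nonfaces transfer
  have hstar1 := hstar.1
  have hstar2 := hstar.2
  have hbdry_nonface : ∀ (S : Finset A) (S' : Finset B),
      Subtype.val '' (S' : Set B) = Subtype.val '' ((S.erase z0 : Finset A) : Set A) →
      z0 ∈ S →
      (¬ ∃ V ∈ T.faces, (V : Set (Fin d → ℝ)) = Subtype.val '' (S : Set A)) →
      ¬ ∃ V ∈ T.faces, (V : Set (Fin d → ℝ)) = Subtype.val '' (S' : Set B) := by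
    rintro S S' hvals hz0S hSnf ⟨V, hVf, hV⟩
    have hVfr : (V : Set (Fin d → ℝ)) ⊆ intrinsicFrontier ℝ P := by
      rw [hV]
      rintro _ ⟨p, -, rfl⟩
      exact p.2.1
    have hconv : convexHull ℝ (V : Set (Fin d → ℝ)) ⊆ intrinsicFrontier ℝ P := by
      rcases hstar1 V hVf with h | ⟨W, -, -, hVW⟩
      · exact h
      · exfalso
        have h0V : (0 : Fin d → ℝ) ∈ (V : Set (Fin d → ℝ)) := by
          rw [hVW]; exact Set.mem_insert _ _
        exact h0notfr (hVfr h0V)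
    obtain ⟨V', hV'f, hV'⟩ := hstar2 V hVf hconv
    refine hSnf ⟨V', hV'f, ?_⟩
    rw [hV', hV, hvals]
    have hSe : S = insert z0 (S.erase z0) := (Finset.insert_erase hz0S).symm
    calc insert (0 : Fin d → ℝ) (Subtype.val '' ((S.erase z0 : Finset A) : Set A))
        = Subtype.val '' (insert z0 ((S.erase z0 : Finset A) : Set A)) := by
          rw [Set.image_insert_eq]
      _ = Subtype.val '' (S : Set A) := by rw [← Finset.coe_insert, ← hSe]
  -- ψ(I) = I_Σ
  have hI : Ideal.map (starMap P) (nonfaceIdeal P T.faces) = bdryNonfaceIdeal P T.faces := by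
    rw [nonfaceIdeal, bdryNonfaceIdeal, Ideal.map_span]
    apply le_antisymm
    · rw [Ideal.span_le]
      rintro _ ⟨m, ⟨S, hSnf, rfl⟩, rfl⟩
      by_cases h0S : z0 ∈ S
      · -- the variable x₀ occurs
        have herase : ∀ p ∈ S.erase z0, (p : Fin d → ℝ) ≠ 0 := by
          intro p hp hval
          exact (Finset.mem_erase.mp hp).1 (Subtype.ext hval)
        obtain ⟨S', hvals, hprod⟩ := hmono (S.erase z0) herase
        have hS'nf := hbdry_nonface S S' hvals h0S hSnf
        rw [← Finset.mul_prod_erase S _ h0S, map_mul, hprod]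
        exact Ideal.mul_mem_left _ _ (Ideal.subset_span ⟨S', hS'nf, rfl⟩)
      · -- no x₀
        have hne : ∀ p ∈ S, (p : Fin d → ℝ) ≠ 0 := by
          intro p hp hval
          exact h0S (by rwa [show p = z0 from Subtype.ext hval] at hp)
        obtain ⟨S', hvals, hprod⟩ := hmono S hne
        rw [hprod]
        refine Ideal.subset_span ⟨S', ?_, rfl⟩
        rintro ⟨V, hVf, hV⟩
        exact hSnf ⟨V, hVf, by rw [hV, hvals]⟩
    · rw [Ideal.span_le]
      rintro _ ⟨S, hSnf, rfl⟩
      have hιinj : ∀ q ∈ S, ∀ q' ∈ S, ι q = ι q' → q = q' := by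
        rintro q - q' - h
        exact Subtype.ext (congrArg (fun t : A => (t : Fin d → ℝ)) h)
      have himg : Subtype.val '' ((S.image ι : Finset A) : Set A) =
          Subtype.val '' (S : Set B) := by
        rw [Finset.coe_image, Set.image_image]
      refine Ideal.subset_span ⟨∏ p ∈ S.image ι, X p, ⟨S.image ι, ?_, rfl⟩, ?_⟩
      · rintro ⟨V, hVf, hV⟩
        exact hSnf ⟨V, hVf, by rw [hV, himg]⟩
      · rw [map_prod, Finset.prod_image hιinj]
        exact Finset.prod_congr rfl fun q _ => hmapι q
  -- ψ(J) = J_Σ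
  have hJ : Ideal.map (starMap P) (linearIdeal P) = bdryLinearIdeal P := by
    rw [linearIdeal, bdryLinearIdeal, Ideal.map_span]
    congr 1
    ext f
    constructor
    · rintro ⟨_, ⟨⟨c, a⟩, rfl⟩, rfl⟩
      exact ⟨a, (hpsi_aff c a).symm⟩
    · rintro ⟨a, rfl⟩
      exact ⟨affineFormPoly P 0 a, ⟨(0, a), rfl⟩, hpsi_aff 0 a⟩
  refine ⟨hI, hJ, ?_⟩
  -- surjectivity of ψ
  have hsurj : Function.Surjective (starMap P) := by
    rw [← AlgHom.range_eq_top, eq_top_iff, ← MvPolynomial.adjoin_range_X]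
    rw [Algebra.adjoin_le_iff]
    rintro _ ⟨q, rfl⟩
    exact ⟨X (ι q), hmapι q⟩
  -- the element ℓ = ∑_p x_p generates the kernel of ψ modulo J
  set ℓ : MvPolynomial A ℂ := affineFormPoly P 1 0 with hℓdef
  have hℓ : ℓ = ∑ p : A, X p := by
    rw [hℓdef, affineFormPoly, finsum_eq_sum_of_fintype]
    refine Finset.sum_congr rfl fun p _ => ?_
    simp
  have hℓsum : (X z0 : MvPolynomial A ℂ) + ∑ q : B, X (ι q) = ℓ := by
    rw [hℓ, ← finsum_eq_sum_of_fintype fun p : A => (X p : MvPolynomial A ℂ),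
      hsplit _ (fun p : A => (X p : MvPolynomial A ℂ)), finsum_eq_sum_of_fintype]
  -- f - rename ι (ψ f) ∈ (ℓ)
  have hτ : ∀ f : MvPolynomial A ℂ,
      f - rename ι (starMap P f) ∈ Ideal.span {ℓ} := by
    intro f
    induction f using MvPolynomial.induction_on with
    | C a => simp [starMap]
    | add f g hf hg =>
      have : f + g - rename ι (starMap P (f + g)) =
          (f - rename ι (starMap P f)) + (g - rename ι (starMap P g)) := by
        rw [map_add, map_add]; ring
      rw [this]; exact Ideal.add_mem _ hf hg
    | mul_X f p hf =>
      have hXp : X p - rename ι (starMap P (X p)) ∈ Ideal.span {ℓ} := by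
        rw [hmapX]
        rcases hcases p with h | h
        · have hpz : p = z0 := Subtype.ext h
          rw [hpz, hstar0, finsum_eq_sum_of_fintype, map_neg, map_sum]
          have : ∀ q : B, rename ι (X q : MvPolynomial B ℂ) = X (ι q) := fun q =>
            rename_X _ _
          rw [Finset.sum_congr rfl fun q _ => this q, sub_neg_eq_add, hℓsum]
          exact Ideal.subset_span rfl
        · rw [hstarfr p h, rename_X]
          have : ι ⟨p.1, h, p.2.2⟩ = p := Subtype.ext rfl
          rw [this, sub_self]
          exact Ideal.zero_mem _
      have : f * X p - rename ι (starMap P (f * X p)) =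
          (f - rename ι (starMap P f)) * X p +
            rename ι (starMap P f) * (X p - rename ι (starMap P (X p))) := by
        rw [map_mul, map_mul]; ring
      rw [this]
      exact Ideal.add_mem _ (Ideal.mul_mem_right _ _ hf) (Ideal.mul_mem_left _ _ hXp)
  have hℓJ : Ideal.span {ℓ} ≤ linearIdeal P := by
    rw [Ideal.span_le, Set.singleton_subset_iff]
    exact Ideal.subset_span ⟨(1, 0), rfl⟩
  set K : Ideal (MvPolynomial A ℂ) := nonfaceIdeal P T.faces + linearIdeal P with hK
  set K' : Ideal (MvPolynomial B ℂ) := bdryNonfaceIdeal P T.faces + bdryLinearIdeal P with hK'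
  have hker : ∀ f : MvPolynomial A ℂ, starMap P f = 0 → f ∈ K := by
    intro f hf
    have h1 : f - rename ι (starMap P f) ∈ Ideal.span {ℓ} := hτ f
    rw [hf, map_zero, sub_zero] at h1
    exact Submodule.mem_sup_right (hℓJ h1)
  have hmapK : Ideal.map (starMap P) K = K' := by
    rw [hK, hK', Submodule.add_eq_sup, Submodule.add_eq_sup, Ideal.map_sup, hI, hJ]
  have hcomap : ∀ f : MvPolynomial A ℂ, starMap P f ∈ K' → f ∈ K := by
    intro f hf
    rw [← hmapK] at hf
    obtain ⟨g, hgK, hgf⟩ := (Ideal.mem_map_iff_of_surjective _ hsurj).mp hf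
    have : f - g ∈ K := hker _ (by rw [map_sub, hgf, sub_self])
    have := Ideal.add_mem _ this hgK
    rwa [sub_add_cancel] at this
  have hKcomap : ∀ f : MvPolynomial A ℂ, f ∈ K → starMap P f ∈ K' := by
    intro f hf
    rw [← hmapK]
    exact Ideal.mem_map_of_mem _ hf
  -- the induced isomorphism
  let F : ChowRing P T.faces →ₐ[ℂ] BdryRing P T.faces :=
    Ideal.Quotient.liftₐ K ((Ideal.Quotient.mkₐ ℂ K').comp (starMap P))
      (fun a ha => by
        show Ideal.Quotient.mkₐ ℂ K' (starMap P a) = 0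
        rw [Ideal.Quotient.mkₐ_eq_mk, Ideal.Quotient.eq_zero_iff_mem]
        exact hKcomap a ha)
  have hFmk : ∀ f : MvPolynomial A ℂ,
      F (Ideal.Quotient.mk K f) = Ideal.Quotient.mk K' (starMap P f) := by
    intro f
    rfl
  have hFbij : Function.Bijective F := by
    constructor
    · rw [injective_iff_map_eq_zero]
      intro x hx
      obtain ⟨f, rfl⟩ := Ideal.Quotient.mk_surjective x
      rw [hFmk, Ideal.Quotient.eq_zero_iff_mem] at hx
      rw [Ideal.Quotient.eq_zero_iff_mem]
      exact hcomap f hx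
    · intro y
      obtain ⟨g, rfl⟩ := Ideal.Quotient.mk_surjective y
      obtain ⟨f, rfl⟩ := hsurj g
      exact ⟨Ideal.Quotient.mk K f, hFmk f⟩
  refine ⟨AlgEquiv.ofBijective F hFbij, fun f => hFmk f, ?_⟩
  -- grading
  intro i x hx
  obtain ⟨f, hf, rfl⟩ := hx
  have hf' : MvPolynomial.IsHomogeneous f i := hf
  have hhom : (starMap P f).IsHomogeneous i := by
    have h1 : ∀ p : A, (starVar P p).IsHomogeneous 1 := by
      intro p
      rw [starVar]
      split_ifs with h1 h2
      · rw [finsum_eq_sum_of_fintype]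
        exact ((IsHomogeneous.sum Finset.univ _ 1) fun q _ =>
          isHomogeneous_X _ _).neg
      · exact isHomogeneous_X _ _
      · exact isHomogeneous_zero _ _ _
    have := hf'.aeval (starVar P) h1
    rwa [one_mul] at this
  show AlgEquiv.ofBijective F hFbij
      ((Ideal.Quotient.mkₐ ℂ K).toLinearMap f) ∈ bdryComponent P T.faces i
  refine ⟨starMap P f, (mem_homogeneousSubmodule _ _).mpr hhom, ?_⟩
  show Ideal.Quotient.mkₐ ℂ K' (starMap P f) = _
  rw [Ideal.Quotient.mkₐ_eq_mk]
  exact (hFmk f).symm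

end EhrhartChow
end
end
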